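/- For every weakly increasing sequence v : ℕ → ℝ, the law P^{(v)} of the infinite q-shuffle of v is a q-exchangeable Borel probability measure on ℝ^ℕ. -/

import Mathlib

open MeasureTheory ProbabilityTheory

/-- The first `j` values `σ(0), …, σ(j-1)` of the infinite `q`-shuffle permutation driven by
the (0-indexed) geometric choices `x`. -/
noncomputable def shufflePrefix (x : ℕ → ℕ) : ℕ → List ℕ
  | 0 => []
  | j + 1 => shufflePrefix x j ++ [Nat.nth (fun m => m ∉ shufflePrefix x j) (x j)]

/-- The random injection `σ : ℕ → ℕ` driving the infinite `q`-shuffle: `σ(j)` is the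
`x j`-th smallest (0-indexed) natural number not in `{σ(0), …, σ(j-1)}`. -/
noncomputable def shuffleSeq (x : ℕ → ℕ) (j : ℕ) : ℕ :=
  Nat.nth (fun m => m ∉ shufflePrefix x j) (x j)

/-- The map on sequences that swaps coordinates `i` and `i+1`. -/
def swapCoord {α : Type*} (i : ℕ) (w : ℕ → α) : ℕ → α :=
  fun j => if j = i then w (i + 1) else if j = i + 1 then w i else w j

/-- A Borel probability measure `P` on `ℝ^ℕ` is `q`-exchangeable if for every `i` the
pushforward of `P` under the swap of coordinates `i` and `i+1` equals the measure with
density `w ↦ q ^ sgn (w (i+1) - w i)` with respect to `P`. -/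
def IsQExchangeable (q : ℝ) (P : Measure (ℕ → ℝ)) : Prop :=
  ∀ i : ℕ, P.map (swapCoord i) =
    P.withDensity (fun w => ENNReal.ofReal (q ^ ((SignType.sign (w (i + 1) - w i)) : ℤ)))


open Classical in
/-- Removing the `a`-th element of an infinite set: ranks below stay. -/
theorem nth_remove_lt {p : ℕ → Prop} (hp : (setOf p).Infinite) {a b : ℕ} (h : b < a) :
    Nat.nth (fun m => p m ∧ m ≠ Nat.nth p a) b = Nat.nth p b := by
  set n := Nat.nth p b with hn
  have hpn : p n := Nat.nth_mem_of_infinite hp b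
  have hlt : n < Nat.nth p a := (Nat.nth_lt_nth hp).2 h
  have hp'n : p n ∧ n ≠ Nat.nth p a := ⟨hpn, hlt.ne⟩
  have hcount : Nat.count (fun m => p m ∧ m ≠ Nat.nth p a) n = Nat.count p n := by
    rw [Nat.count_eq_card_filter_range, Nat.count_eq_card_filter_range]
    congr 1
    apply Finset.filter_congr
    intro m hm
    simp only [Finset.mem_range] at hm
    have : m ≠ Nat.nth p a := (hm.trans hlt).ne
    simp [this]
  have := Nat.nth_count (p := fun m => p m ∧ m ≠ Nat.nth p a) hp'n
  rwa [hcount, Nat.count_nth_of_infinite hp] at this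

open Classical in
/-- Removing the `a`-th element of an infinite set: ranks at or above shift by one. -/
theorem nth_remove_ge {p : ℕ → Prop} (hp : (setOf p).Infinite) {a b : ℕ} (h : a ≤ b) :
    Nat.nth (fun m => p m ∧ m ≠ Nat.nth p a) b = Nat.nth p (b + 1) := by
  set n := Nat.nth p (b + 1) with hn
  have hpn : p n := Nat.nth_mem_of_infinite hp _
  have hlt : Nat.nth p a < n := (Nat.nth_lt_nth hp).2 (Nat.lt_succ_of_le h)
  have hp'n : p n ∧ n ≠ Nat.nth p a := ⟨hpn, hlt.ne'⟩
  have hcount : Nat.count (fun m => p m ∧ m ≠ Nat.nth p a) n = b := by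
    rw [Nat.count_eq_card_filter_range]
    have hfil : {x ∈ Finset.range n | p x ∧ x ≠ Nat.nth p a}
        = {x ∈ Finset.range n | p x}.erase (Nat.nth p a) := by
      ext m
      simp only [Finset.mem_filter, Finset.mem_erase, Finset.mem_range]
      tauto
    have hmem : Nat.nth p a ∈ {x ∈ Finset.range n | p x} := by
      simp [Finset.mem_filter, Finset.mem_range, hlt, Nat.nth_mem_of_infinite hp a]
    rw [hfil, Finset.card_erase_of_mem hmem, ← Nat.count_eq_card_filter_range,
      Nat.count_nth_of_infinite hp]
    rfl
  have := Nat.nth_count (p := fun m => p m ∧ m ≠ Nat.nth p a) hp'n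
  rwa [hcount] at this

/-- the swap on the pair of geometric choices -/
def tauPair (ab : ℕ × ℕ) : ℕ × ℕ :=
  if ab.1 ≤ ab.2 then (ab.2 + 1, ab.1) else (ab.2, ab.1 - 1)

theorem tauPair_invol (ab : ℕ × ℕ) : tauPair (tauPair ab) = ab := by
  obtain ⟨a, b⟩ := ab
  unfold tauPair
  by_cases h : a ≤ b
  · simp only [h, if_true]
    have : ¬ (b + 1 ≤ a) := by omega
    simp [this]
  · simp only [h, if_false]
    have h1 : b ≤ a - 1 := by omega
    simp only [h1, if_true]
    have : a - 1 + 1 = a := by omega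
    simp [this]

/-- the swap map on driving sequences -/
def swapDrive (i : ℕ) (x : ℕ → ℕ) : ℕ → ℕ :=
  fun j => if j = i then (tauPair (x i, x (i + 1))).1
    else if j = i + 1 then (tauPair (x i, x (i + 1))).2 else x j

theorem swapDrive_i (i : ℕ) (x : ℕ → ℕ) : swapDrive i x i = (tauPair (x i, x (i + 1))).1 := by
  simp [swapDrive]

theorem swapDrive_i1 (i : ℕ) (x : ℕ → ℕ) :
    swapDrive i x (i + 1) = (tauPair (x i, x (i + 1))).2 := by
  unfold swapDrive
  rw [if_neg (by omega), if_pos rfl]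

theorem swapDrive_other (i : ℕ) (x : ℕ → ℕ) {j : ℕ} (h1 : j ≠ i) (h2 : j ≠ i + 1) :
    swapDrive i x j = x j := by
  unfold swapDrive
  rw [if_neg h1, if_neg h2]

theorem swapDrive_invol (i : ℕ) (x : ℕ → ℕ) : swapDrive i (swapDrive i x) = x := by
  have key : (swapDrive i x i, swapDrive i x (i + 1)) = tauPair (x i, x (i + 1)) := by
    rw [swapDrive_i, swapDrive_i1]
  funext j
  by_cases hj : j = i
  · subst hj
    rw [swapDrive_i, key, tauPair_invol]
  · by_cases hj' : j = i + 1
    · subst hj'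
      rw [swapDrive_i1, key, tauPair_invol]
    · rw [swapDrive_other i _ hj hj', swapDrive_other i _ hj hj']

theorem notMem_list_infinite (l : List ℕ) : {m : ℕ | m ∉ l}.Infinite := by
  have : {m : ℕ | m ∈ l}.Finite := l.finite_toSet
  exact this.infinite_compl

theorem shufflePrefix_congr {x x' : ℕ → ℕ} {j : ℕ} (h : ∀ k < j, x k = x' k) :
    shufflePrefix x j = shufflePrefix x' j := by
  induction j with
  | zero => rfl
  | succ j ih =>
    have h1 : shufflePrefix x j = shufflePrefix x' j := ih fun k hk => h k (by omega)
    simp only [shufflePrefix, h1, h j (by omega)]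

theorem shuffleSeq_congr {x x' : ℕ → ℕ} {j : ℕ} (h : ∀ k ≤ j, x k = x' k) :
    shuffleSeq x j = shuffleSeq x' j := by
  unfold shuffleSeq
  rw [shufflePrefix_congr (fun k hk => h k (by omega)), h j le_rfl]

theorem shuffleSeq_not_mem (x : ℕ → ℕ) (j : ℕ) : shuffleSeq x j ∉ shufflePrefix x j :=
  Nat.nth_mem_of_infinite (notMem_list_infinite _) (x j)

theorem shufflePrefix_succ (x : ℕ → ℕ) (j : ℕ) :
    shufflePrefix x (j + 1) = shufflePrefix x j ++ [shuffleSeq x j] := rfl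

section swap

variable (i : ℕ) (x : ℕ → ℕ)

theorem prefix_swapDrive_eq : shufflePrefix (swapDrive i x) i = shufflePrefix x i :=
  shufflePrefix_congr fun k hk => swapDrive_other i x (by omega) (by omega)

/-- the predicate at step i+1 as a "remove one point" predicate -/
theorem pred_step (y : ℕ → ℕ) (j : ℕ) (m : ℕ) :
    (m ∉ shufflePrefix y (j + 1)) ↔
      ((m ∉ shufflePrefix y j) ∧ m ≠ Nat.nth (fun m => m ∉ shufflePrefix y j) (y j)) := by
  rw [shufflePrefix_succ]
  simp only [List.mem_append, List.mem_singleton, shuffleSeq]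
  tauto

theorem shuffleSeq_swapDrive_i :
    shuffleSeq (swapDrive i x) i = shuffleSeq x (i + 1) := by
  have hp : (setOf fun m => m ∉ shufflePrefix x i).Infinite := notMem_list_infinite _
  have hpredeq : (fun m => m ∉ shufflePrefix x (i + 1))
      = fun m => (m ∉ shufflePrefix x i) ∧ m ≠ Nat.nth (fun m => m ∉ shufflePrefix x i) (x i) := by
    funext m; exact propext (pred_step x i m)
  unfold shuffleSeq
  rw [prefix_swapDrive_eq i x, swapDrive_i, hpredeq]
  unfold tauPair
  by_cases h : x i ≤ x (i + 1)
  · simp only [h, if_true]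
    exact (nth_remove_ge hp h).symm
  · simp only [h, if_false]
    exact (nth_remove_lt hp (by omega)).symm

theorem shuffleSeq_swapDrive_i1 :
    shuffleSeq (swapDrive i x) (i + 1) = shuffleSeq x i := by
  have hp : (setOf fun m => m ∉ shufflePrefix x i).Infinite := notMem_list_infinite _
  have hpredeq : (fun m => m ∉ shufflePrefix (swapDrive i x) (i + 1))
      = fun m => (m ∉ shufflePrefix x i) ∧
          m ≠ Nat.nth (fun m => m ∉ shufflePrefix x i) ((tauPair (x i, x (i+1))).1) := by
    funext m
    rw [eq_iff_iff, pred_step (swapDrive i x) i m, prefix_swapDrive_eq i x, swapDrive_i]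
  unfold shuffleSeq
  rw [hpredeq, swapDrive_i1]
  unfold tauPair
  by_cases h : x i ≤ x (i + 1)
  · simp only [h, if_true]
    exact nth_remove_lt hp (by omega)
  · simp only [h, if_false]
    rw [nth_remove_ge hp (by omega : x (i+1) ≤ x i - 1)]
    congr 1
    omega

theorem prefix_swapDrive_mem_ge (j : ℕ) (hj : i + 2 ≤ j) :
    ∀ m, (m ∈ shufflePrefix (swapDrive i x) j ↔ m ∈ shufflePrefix x j) := by
  induction j with
  | zero => omega
  | succ j ih =>
    intro m
    rcases Nat.lt_or_ge j (i + 2) with hj' | hj'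
    · have : j = i + 1 := by omega
      subst this
      rw [shufflePrefix_succ, shufflePrefix_succ (swapDrive i x),
        shufflePrefix_succ, shufflePrefix_succ x, prefix_swapDrive_eq i x,
        shuffleSeq_swapDrive_i, shuffleSeq_swapDrive_i1]
      simp only [List.mem_append, List.mem_singleton]
      tauto
    · have hpredeq : (fun m => m ∉ shufflePrefix (swapDrive i x) j)
          = fun m => m ∉ shufflePrefix x j := by
        funext m'; rw [eq_iff_iff, not_iff_not]; exact ih (by omega) m'
      rw [shufflePrefix_succ, shufflePrefix_succ]
      simp only [List.mem_append, List.mem_singleton]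
      unfold shuffleSeq
      rw [hpredeq, ih (by omega) m, swapDrive_other i x (by omega) (by omega)]

theorem shuffleSeq_swapDrive_other (j : ℕ) (hj1 : j ≠ i) (hj2 : j ≠ i + 1) :
    shuffleSeq (swapDrive i x) j = shuffleSeq x j := by
  rcases Nat.lt_or_ge j i with hj | hj
  · exact shuffleSeq_congr fun k hk => swapDrive_other i x (by omega) (by omega)
  · have hj' : i + 2 ≤ j := by omega
    unfold shuffleSeq
    have hpredeq : (fun m => m ∉ shufflePrefix (swapDrive i x) j)
        = fun m => m ∉ shufflePrefix x j := by
      funext m; rw [eq_iff_iff, not_iff_not]; exact prefix_swapDrive_mem_ge i x j hj' m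
    rw [hpredeq, swapDrive_other i x (by omega) (by omega)]

theorem shuffleSeq_lt_iff :
    (x i ≤ x (i + 1) ↔ shuffleSeq x i < shuffleSeq x (i + 1)) := by
  have hp : (setOf fun m => m ∉ shufflePrefix x i).Infinite := notMem_list_infinite _
  have hpredeq : (fun m => m ∉ shufflePrefix x (i + 1))
      = fun m => (m ∉ shufflePrefix x i) ∧ m ≠ Nat.nth (fun m => m ∉ shufflePrefix x i) (x i) := by
    funext m; exact propext (pred_step x i m)
  constructor
  · intro h
    show shuffleSeq x i < shuffleSeq x (i+1)
    unfold shuffleSeq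
    rw [hpredeq, nth_remove_ge hp h]
    exact (Nat.nth_lt_nth hp).2 (by omega)
  · intro h
    by_contra hc
    have hc' : x (i + 1) < x i := by omega
    have : shuffleSeq x (i + 1) < shuffleSeq x i := by
      unfold shuffleSeq
      rw [hpredeq, nth_remove_lt hp hc']
      exact (Nat.nth_lt_nth hp).2 hc'
    omega

theorem shuffleSeq_ne : shuffleSeq x i ≠ shuffleSeq x (i + 1) := by
  intro h
  have hmem := shuffleSeq_not_mem x (i+1)
  rw [shufflePrefix_succ] at hmem
  simp only [List.mem_append, List.mem_singleton] at hmem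
  push_neg at hmem
  exact hmem.2 h.symm

theorem shuffleSeq_gt_iff :
    (x (i + 1) < x i ↔ shuffleSeq x (i + 1) < shuffleSeq x i) := by
  rcases Nat.lt_or_ge (x (i+1)) (x i) with h | h
  · constructor
    · intro _
      by_contra hc
      have h2 : shuffleSeq x i ≤ shuffleSeq x (i+1) := by omega
      rcases h2.lt_or_eq with h3 | h3
      · have := (shuffleSeq_lt_iff i x).2 h3; omega
      · exact shuffleSeq_ne i x h3
    · intro _; exact h
  · have h1 := (shuffleSeq_lt_iff i x).1 h
    constructor <;> intro h2 <;> omega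

end swap

section measureL1

open Set

/-- point cylinder -/
def pointCyl (t : Finset ℕ) (z : ℕ → ℕ) : Set (ℕ → ℕ) := {x | ∀ j ∈ t, x j = z j}

theorem measurableSet_pointCyl (t : Finset ℕ) (z : ℕ → ℕ) : MeasurableSet (pointCyl t z) := by
  have h : pointCyl t z = ⋂ j ∈ t, (fun x : ℕ → ℕ => x j) ⁻¹' {z j} := by
    ext x; simp [pointCyl]
  rw [h]
  exact MeasurableSet.biInter (t : Set ℕ).to_countable fun j _ =>
    (measurable_pi_apply j) (measurableSet_singleton _)

theorem measurable_swapDrive (i : ℕ) : Measurable (swapDrive i) := by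
  apply measurable_pi_lambda
  intro j
  have hpair : Measurable (fun x : ℕ → ℕ => ((x i, x (i + 1)), x j)) :=
    ((measurable_pi_apply i).prodMk (measurable_pi_apply (i + 1))).prodMk
      (measurable_pi_apply j)
  have key : (fun x : ℕ → ℕ => swapDrive i x j)
      = (fun p : (ℕ × ℕ) × ℕ =>
          if j = i then (tauPair p.1).1 else if j = i + 1 then (tauPair p.1).2 else p.2)
        ∘ (fun x : ℕ → ℕ => ((x i, x (i + 1)), x j)) := rfl
  rw [key]
  exact (measurable_of_countable _).comp hpair

theorem measurable_shuffleSeq (j : ℕ) : Measurable (fun x : ℕ → ℕ => shuffleSeq x j) := by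
  have hres : Measurable (fun (x : ℕ → ℕ) (k : Fin (j + 1)) => x k) :=
    measurable_pi_lambda _ fun k => measurable_pi_apply _
  have key : (fun x : ℕ → ℕ => shuffleSeq x j)
      = (fun y : Fin (j + 1) → ℕ =>
          shuffleSeq (fun k => if h : k < j + 1 then y ⟨k, h⟩ else 0) j)
        ∘ (fun (x : ℕ → ℕ) (k : Fin (j + 1)) => x k) := by
    funext x
    exact shuffleSeq_congr fun k hk => by
      simp only [Function.comp]
      rw [dif_pos (by omega : k < j + 1)]
  rw [key]
  exact (measurable_of_countable _).comp hres

theorem swapDrive_congr_at (i : ℕ) {x u : ℕ → ℕ} (hi : x i = u i) (hi1 : x (i + 1) = u (i + 1))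
    {j : ℕ} (hj : x j = u j) : swapDrive i x j = swapDrive i u j := by
  unfold swapDrive
  rw [hi, hi1, hj]

theorem swapDrive_preimage_pointCyl (i : ℕ) (t : Finset ℕ) (hi : i ∈ t) (hi1 : i + 1 ∈ t)
    (z : ℕ → ℕ) : swapDrive i ⁻¹' (pointCyl t z) = pointCyl t (swapDrive i z) := by
  ext x
  simp only [Set.mem_preimage, pointCyl, Set.mem_setOf_eq]
  constructor
  · intro h j hj
    have : x j = swapDrive i (swapDrive i x) j := by rw [swapDrive_invol]
    rw [this]
    exact swapDrive_congr_at i (h i hi) (h (i + 1) hi1) (h j hj)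
  · intro h j hj
    have : z j = swapDrive i (swapDrive i z) j := by rw [swapDrive_invol]
    rw [this]
    exact swapDrive_congr_at i (h i hi) (h (i + 1) hi1) (h j hj)

variable {Ω : Type*} [MeasurableSpace Ω] (P : Measure Ω) [IsProbabilityMeasure P]
  (q : ℝ) (ξ : ℕ → Ω → ℕ)

theorem measure_pointCyl (hmeas : ∀ j, Measurable (ξ j))
    (hindep : iIndepFun ξ P)
    (hgeom : ∀ j i : ℕ, P {ω | ξ j ω = i} = ENNReal.ofReal ((1 - q) * q ^ i))
    (t : Finset ℕ) (z : ℕ → ℕ) :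
    (P.map (fun ω (s : ℕ) => ξ s ω)) (pointCyl t z)
      = ∏ j ∈ t, ENNReal.ofReal ((1 - q) * q ^ (z j)) := by
  have hX : Measurable (fun ω (s : ℕ) => ξ s ω) := measurable_pi_lambda _ hmeas
  rw [Measure.map_apply hX (measurableSet_pointCyl t z)]
  have hpre : (fun ω (s : ℕ) => ξ s ω) ⁻¹' (pointCyl t z) = ⋂ j ∈ t, (ξ j) ⁻¹' {z j} := by
    ext ω; simp [pointCyl]
  rw [hpre,
    hindep.measure_inter_preimage_eq_mul t (fun j _ => measurableSet_singleton (z j))]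
  refine Finset.prod_congr rfl fun j _ => ?_
  rw [← hgeom j (z j)]
  rfl

theorem L1 (hq0 : 0 < q) (hq1 : q < 1) (hmeas : ∀ j, Measurable (ξ j))
    (hindep : iIndepFun ξ P)
    (hgeom : ∀ j i : ℕ, P {ω | ξ j ω = i} = ENNReal.ofReal ((1 - q) * q ^ i)) (i : ℕ) :
    (P.map (fun ω (s : ℕ) => ξ s ω)).map (swapDrive i)
      = (P.map (fun ω (s : ℕ) => ξ s ω)).withDensity
          (fun x => ENNReal.ofReal (if x i ≤ x (i + 1) then q else q⁻¹)) := by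
  have hq0' : (0 : ℝ) ≤ q := hq0.le
  have hq1' : (0 : ℝ) ≤ 1 - q := by linarith
  have hX : Measurable (fun ω (s : ℕ) => ξ s ω) := measurable_pi_lambda _ hmeas
  set ν : Measure (ℕ → ℕ) := P.map (fun ω (s : ℕ) => ξ s ω) with hν
  set g : (ℕ → ℕ) → ENNReal :=
    (fun x => ENNReal.ofReal (if x i ≤ x (i + 1) then q else q⁻¹)) with hg
  have hT : Measurable (swapDrive i) := measurable_swapDrive i
  haveI : IsProbabilityMeasure ν := Measure.isProbabilityMeasure_map hX.aemeasurable
  haveI : IsProbabilityMeasure (ν.map (swapDrive i)) :=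
    Measure.isProbabilityMeasure_map hT.aemeasurable
  -- the per-point-cylinder identity
  have hpoint : ∀ (t : Finset ℕ), i ∈ t → i + 1 ∈ t → ∀ z : ℕ → ℕ,
      (ν.map (swapDrive i)) (pointCyl t z) = (ν.withDensity g) (pointCyl t z) := by
    intro t hi hi1 z
    set G : ℕ → ENNReal := fun k => ENNReal.ofReal ((1 - q) * q ^ k) with hG
    have hGpos : ∀ k, G (k + 1) = ENNReal.ofReal q * G k := by
      intro k
      rw [hG]
      simp only
      rw [← ENNReal.ofReal_mul hq0']
      congr 1
      ring
    have hprod : ∀ w : ℕ → ℕ, ∏ j ∈ t, G (w j)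
        = G (w i) * (G (w (i + 1)) * ∏ j ∈ (t.erase i).erase (i + 1), G (w j)) := by
      intro w
      rw [Finset.mul_prod_erase (t.erase i) (fun j => G (w j))
        (Finset.mem_erase.2 ⟨by omega, hi1⟩), Finset.mul_prod_erase t (fun j => G (w j)) hi]
    -- LHS
    have hLHS : (ν.map (swapDrive i)) (pointCyl t z) = ∏ j ∈ t, G (swapDrive i z j) := by
      rw [Measure.map_apply hT (measurableSet_pointCyl t z),
        swapDrive_preimage_pointCyl i t hi hi1 z, hν,
        measure_pointCyl P q ξ hmeas hindep hgeom]
    -- RHS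
    have hRHS : (ν.withDensity g) (pointCyl t z)
        = ENNReal.ofReal (if z i ≤ z (i + 1) then q else q⁻¹) * ∏ j ∈ t, G (z j) := by
      rw [withDensity_apply g (measurableSet_pointCyl t z)]
      rw [setLIntegral_congr_fun (measurableSet_pointCyl t z)
        ((fun x hx => by
            show g x = ENNReal.ofReal (if z i ≤ z (i + 1) then q else q⁻¹)
            rw [hg]
            simp only
            rw [hx i hi, hx (i + 1) hi1])),
        setLIntegral_const, hν, measure_pointCyl P q ξ hmeas hindep hgeom]
    rw [hLHS, hRHS, hprod, hprod]
    have hrest : ∀ j ∈ (t.erase i).erase (i + 1), G (swapDrive i z j) = G (z j) := by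
      intro j hj
      rw [swapDrive_other i z (Finset.mem_erase.1 (Finset.mem_erase.1 hj).2).1
        (Finset.mem_erase.1 hj).1]
    rw [Finset.prod_congr rfl hrest]
    -- now the 2x2 scalar identity
    set R := ∏ j ∈ (t.erase i).erase (i + 1), G (z j)
    have hGsplit : ∀ k, G k = ENNReal.ofReal (1 - q) * ENNReal.ofReal q ^ k := by
      intro k
      rw [hG]
      simp only
      rw [ENNReal.ofReal_mul hq1', ENNReal.ofReal_pow hq0']
    have hQQ : ENNReal.ofReal q⁻¹ * ENNReal.ofReal q = 1 := by
      rw [← ENNReal.ofReal_mul (by positivity), inv_mul_cancel₀ hq0.ne', ENNReal.ofReal_one]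
    have hkey : G (swapDrive i z i) * G (swapDrive i z (i + 1))
        = ENNReal.ofReal (if z i ≤ z (i + 1) then q else q⁻¹) * (G (z i) * G (z (i + 1))) := by
      rw [swapDrive_i, swapDrive_i1]
      unfold tauPair
      by_cases h : z i ≤ z (i + 1)
      · simp only [h, if_true]
        rw [hGpos (z (i + 1))]
        ring
      · simp only [h, if_false]
        obtain ⟨c, hc⟩ : ∃ c, z i = c + 1 := ⟨z i - 1, by omega⟩
        rw [hc]
        simp only [Nat.add_sub_cancel]
        calc G (z (i + 1)) * G c
            = (ENNReal.ofReal q⁻¹ * ENNReal.ofReal q) * (G c * G (z (i + 1))) := by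
              rw [hQQ, one_mul]; ring
          _ = ENNReal.ofReal q⁻¹ * (G (c + 1) * G (z (i + 1))) := by
              rw [hGsplit (c + 1), hGsplit c, pow_succ]; ring
    calc G (swapDrive i z i) * (G (swapDrive i z (i + 1)) * R)
        = (G (swapDrive i z i) * G (swapDrive i z (i + 1))) * R := by ring
      _ = ENNReal.ofReal (if z i ≤ z (i + 1) then q else q⁻¹)
            * (G (z i) * (G (z (i + 1)) * R)) := by rw [hkey]; ring
  -- general cylinder identity
  have hcyl : ∀ s ∈ measurableCylinders (fun _ : ℕ => ℕ),
      (ν.map (swapDrive i)) s = (ν.withDensity g) s := by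
    intro s hs
    obtain ⟨t0, S, hS, rfl⟩ := (mem_measurableCylinders s).1 hs
    classical
    set t : Finset ℕ := t0 ∪ {i, i + 1} with ht
    have ht0 : t0 ⊆ t := Finset.subset_union_left
    have hit : i ∈ t := Finset.mem_union_right _ (by simp)
    have hi1t : i + 1 ∈ t := Finset.mem_union_right _ (by simp)
    set ext : (∀ j : t, ℕ) → (ℕ → ℕ) :=
      fun w j => if h : j ∈ t then w ⟨j, h⟩ else 0 with hext
    set S'' : Set (∀ j : t, ℕ) := {w | (fun j : t0 => w ⟨j.1, ht0 j.2⟩) ∈ S} with hS''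
    have hdecomp : cylinder t0 S = ⋃ w ∈ S'', pointCyl t (ext w) := by
      ext x
      simp only [mem_cylinder, Set.mem_iUnion]
      constructor
      · intro hx
        refine ⟨fun j : t => x j, hx, fun j hj => ?_⟩
        rw [hext]
        simp only
        rw [dif_pos hj]
      · rintro ⟨w, hw, hxw⟩
        have : Finset.restrict t0 x = fun j : t0 => w ⟨j.1, ht0 j.2⟩ := by
          funext j
          have := hxw j.1 (ht0 j.2)
          rw [hext] at this
          simp only at this
          rw [dif_pos (ht0 j.2)] at this
          exact this
        rw [this]
        exact hw
    have hdisj : S''.PairwiseDisjoint (fun w => pointCyl t (ext w)) := by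
      intro w hw w' hw' hne
      refine Set.disjoint_left.2 fun x hxw hxw' => hne ?_
      funext j
      have h1 := hxw j.1 j.2
      have h2 := hxw' j.1 j.2
      rw [hext] at h1 h2
      simp only at h1 h2
      rw [dif_pos j.2] at h1 h2
      rw [← Subtype.eta j j.2, ← h1, h2]
    rw [hdecomp,
      measure_biUnion (Set.to_countable S'') hdisj (fun w _ => measurableSet_pointCyl t _),
      measure_biUnion (Set.to_countable S'') hdisj (fun w _ => measurableSet_pointCyl t _)]
    exact tsum_congr fun w => hpoint t hit hi1t (ext w)
  refine ext_of_generate_finite (measurableCylinders (fun _ : ℕ => ℕ))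
    ?_ isPiSystem_measurableCylinders hcyl ?_
  · exact generateFrom_measurableCylinders.symm
  · exact hcyl Set.univ (univ_mem_measurableCylinders _)

end measureL1


theorem swapCoord_of_eq {α : Type*} (i : ℕ) {w : ℕ → α} (h : w i = w (i + 1)) :
    swapCoord i w = w := by
  funext j
  unfold swapCoord
  by_cases h1 : j = i
  · subst h1; rw [if_pos rfl, ← h]
  · rw [if_neg h1]
    by_cases h2 : j = i + 1
    · subst h2; rw [if_pos rfl, h]
    · rw [if_neg h2]

theorem stmt_9' (q : ℝ) (hq0 : 0 < q) (hq1 : q < 1)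
    (Ω : Type*) [MeasurableSpace Ω] (P : Measure Ω) [IsProbabilityMeasure P]
    (ξ : ℕ → Ω → ℕ) (hmeas : ∀ j, Measurable (ξ j))
    (hindep : iIndepFun ξ P)
    (hgeom : ∀ j i : ℕ, P {ω | ξ j ω = i} = ENNReal.ofReal ((1 - q) * q ^ i))
    (v : ℕ → ℝ) (hv : Monotone v) :
    IsQExchangeable q (P.map (fun ω (j : ℕ) => v (shuffleSeq (fun t => ξ t ω) j))) := by
  intro i
  classical
  have hX : Measurable (fun ω (s : ℕ) => ξ s ω) := measurable_pi_lambda _ hmeas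
  have hL1 := L1 P q ξ hq0 hq1 hmeas hindep hgeom i
  set ν : Measure (ℕ → ℕ) := P.map (fun ω (s : ℕ) => ξ s ω) with hν
  set W : (ℕ → ℕ) → (ℕ → ℝ) := fun x j => v (shuffleSeq x j) with hW
  have hWm : Measurable W := measurable_pi_lambda _ fun j =>
    (measurable_of_countable v).comp (measurable_shuffleSeq j)
  have hmap : P.map (fun ω (j : ℕ) => v (shuffleSeq (fun t => ξ t ω) j)) = ν.map W := by
    rw [hν, Measure.map_map hWm hX]
    rfl
  rw [hmap]
  set g : (ℕ → ℕ) → ENNReal :=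
    (fun x => ENNReal.ofReal (if x i ≤ x (i + 1) then q else q⁻¹)) with hg
  set f : (ℕ → ℝ) → ENNReal :=
    (fun w => ENNReal.ofReal (q ^ ((SignType.sign (w (i + 1) - w i)) : ℤ))) with hf
  have hfeq : f = fun w : ℕ → ℝ =>
      if w i < w (i + 1) then ENNReal.ofReal q
      else if w (i + 1) < w i then ENNReal.ofReal q⁻¹ else 1 := by
    funext w
    rw [hf]
    simp only
    rcases lt_trichotomy (w i) (w (i + 1)) with h | h | h
    · rw [if_pos h, sign_pos (by linarith : (0:ℝ) < w (i + 1) - w i)]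
      norm_num
    · rw [if_neg (by rw [h]; exact lt_irrefl _), if_neg (by rw [h]; exact lt_irrefl _),
        h, sub_self, sign_zero]
      norm_num
    · rw [if_neg (by exact not_lt.2 h.le), if_pos h,
        sign_neg (by linarith : w (i + 1) - w i < (0:ℝ))]
      norm_num
  have hfm : Measurable f := by
    rw [hfeq]
    exact Measurable.ite
      (measurableSet_lt (measurable_pi_apply i) (measurable_pi_apply (i + 1)))
      measurable_const
      (Measurable.ite
        (measurableSet_lt (measurable_pi_apply (i + 1)) (measurable_pi_apply i))
        measurable_const measurable_const)
  have hswap : Measurable (swapCoord (α := ℝ) i) := by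
    apply measurable_pi_lambda
    intro j
    unfold swapCoord
    by_cases h1 : j = i
    · simp only [h1, if_pos rfl]
      exact measurable_pi_apply _
    · simp only [if_neg h1]
      by_cases h2 : j = i + 1
      · simp only [h2, if_pos rfl]
        exact measurable_pi_apply _
      · simp only [if_neg h2]
        exact measurable_pi_apply _
  have hTm : Measurable (swapDrive i) := measurable_swapDrive i
  have hcomm : swapCoord i ∘ W = W ∘ swapDrive i := by
    funext x
    funext j
    simp only [Function.comp_apply, swapCoord, hW]
    by_cases h1 : j = i
    · subst h1; rw [if_pos rfl, shuffleSeq_swapDrive_i]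
    · rw [if_neg h1]
      by_cases h2 : j = i + 1
      · subst h2; rw [if_pos rfl, shuffleSeq_swapDrive_i1]
      · rw [if_neg h2, shuffleSeq_swapDrive_other i x j h1 h2]
  have hstep : (ν.map W).map (swapCoord i) = (ν.map (swapDrive i)).map W := by
    rw [Measure.map_map hswap hWm, hcomm, ← Measure.map_map hWm hTm]
  rw [hstep, hL1]
  -- now : (ν.withDensity g).map W = (ν.map W).withDensity f
  refine Measure.ext fun A hA => ?_
  have hB : MeasurableSet (W ⁻¹' A) := hWm hA
  set B : Set (ℕ → ℕ) := W ⁻¹' A with hBdef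
  rw [Measure.map_apply hWm hA, withDensity_apply _ hB, withDensity_apply _ hA,
    setLIntegral_map hA hfm hWm]
  -- goal : ∫⁻ x in B, g x ∂ν = ∫⁻ x in B, f (W x) ∂ν
  set E : Set (ℕ → ℕ) := {x | v (shuffleSeq x i) = v (shuffleSeq x (i + 1))} with hE
  have hEm : MeasurableSet E :=
    measurableSet_eq_fun ((measurable_of_countable v).comp (measurable_shuffleSeq i))
      ((measurable_of_countable v).comp (measurable_shuffleSeq (i + 1)))
  have hsplit : ∀ h : (ℕ → ℕ) → ENNReal,
      ∫⁻ x in B, h x ∂ν = ∫⁻ x in E ∩ B, h x ∂ν + ∫⁻ x in Eᶜ ∩ B, h x ∂ν := by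
    intro h
    rw [← lintegral_add_compl h hEm (μ := ν.restrict B),
      Measure.restrict_restrict hEm, Measure.restrict_restrict hEm.compl]
  -- on E ∩ B : f (W x) = 1 and swapDrive-invariance
  have hWE : ∀ x ∈ E, W (swapDrive i x) = W x := by
    intro x hx
    have h1 : W x i = W x (i + 1) := hx
    calc W (swapDrive i x) = (swapCoord i ∘ W) x := (congrFun hcomm x).symm
      _ = W x := swapCoord_of_eq i h1
  have hTinv : swapDrive i ⁻¹' (E ∩ B) = E ∩ B := by
    ext x
    simp only [Set.mem_preimage, Set.mem_inter_iff]
    have hExE : swapDrive i x ∈ E ↔ x ∈ E := by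
      simp only [hE, Set.mem_setOf_eq, shuffleSeq_swapDrive_i, shuffleSeq_swapDrive_i1]
      exact eq_comm
    constructor
    · rintro ⟨h1, h2⟩
      have hxE : x ∈ E := hExE.1 h1
      refine ⟨hxE, ?_⟩
      have := hWE x hxE
      simpa [hBdef, Set.mem_preimage, this] using h2
    · rintro ⟨h1, h2⟩
      refine ⟨hExE.2 h1, ?_⟩
      have := hWE x h1
      simpa [hBdef, Set.mem_preimage, this] using h2
  have h3 : ν (E ∩ B) = ∫⁻ x in E ∩ B, g x ∂ν := by
    have hm : MeasurableSet (E ∩ B) := hEm.inter hB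
    have h := congrArg (fun μ : Measure (ℕ → ℕ) => μ (E ∩ B)) hL1
    rw [Measure.map_apply hTm hm, withDensity_apply _ hm, hTinv] at h
    exact h
  have h2 : ∫⁻ x in E ∩ B, f (W x) ∂ν = ν (E ∩ B) := by
    rw [setLIntegral_congr_fun (hEm.inter hB)
      (fun x hx => ?_), setLIntegral_const, one_mul]
    have hxE : x ∈ E := hx.1
    have h1 : W x i = W x (i + 1) := hxE
    rw [hfeq]
    simp only
    rw [if_neg (by rw [h1]; exact lt_irrefl _), if_neg (by rw [h1]; exact lt_irrefl _)]
  have h1 : ∫⁻ x in Eᶜ ∩ B, g x ∂ν = ∫⁻ x in Eᶜ ∩ B, f (W x) ∂ν := by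
    refine setLIntegral_congr_fun (hEm.compl.inter hB)
      (fun x hx => ?_)
    have hxE : x ∉ E := hx.1
    simp only [hE, Set.mem_setOf_eq] at hxE
    rw [hfeq, hg]
    simp only [hW]
    rcases lt_trichotomy (v (shuffleSeq x i)) (v (shuffleSeq x (i + 1))) with h | h | h
    · rw [if_pos h]
      have hle : x i ≤ x (i + 1) := by
        by_contra hc
        have := (shuffleSeq_gt_iff i x).1 (by omega)
        have := hv this.le
        linarith
      rw [if_pos hle]
    · exact absurd h hxE
    · rw [if_neg (not_lt.2 h.le), if_pos h]
      have hle : ¬ (x i ≤ x (i + 1)) := by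
        intro hc
        have := (shuffleSeq_lt_iff i x).1 hc
        have := hv this.le
        linarith
      rw [if_neg hle]
  rw [hsplit g, hsplit (fun x => f (W x)), ← h3, h2, h1]

/-- for every weakly increasing `v : ℕ → ℝ`, the law `P^{(v)}` of the infinite
`q`-shuffle `w = (v_{σ(0)}, v_{σ(1)}, …)` of `v` is a `q`-exchangeable probability measure
on `ℝ^ℕ`.  Here `ξ_0, ξ_1, …` are independent with the (0-indexed) geometric law
`P(ξ = i) = (1-q) q^i`. -/
theorem stmt_9 (q : ℝ) (hq0 : 0 < q) (hq1 : q < 1)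
    (Ω : Type*) [MeasurableSpace Ω] (P : Measure Ω) [IsProbabilityMeasure P]
    (ξ : ℕ → Ω → ℕ) (hmeas : ∀ j, Measurable (ξ j))
    (hindep : iIndepFun ξ P)
    (hgeom : ∀ j i : ℕ, P {ω | ξ j ω = i} = ENNReal.ofReal ((1 - q) * q ^ i))
    (v : ℕ → ℝ) (hv : Monotone v) :
    IsQExchangeable q (P.map (fun ω (j : ℕ) => v (shuffleSeq (fun t => ξ t ω) j))) :=
  stmt_9' q hq0 hq1 Ω P ξ hmeas hindep hgeom v hv
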